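/- Suppose {F^Y_α : α ∈ A} and {F^X_α : α ∈ A} are filtrations indexed by a partially ordered set A, and X is C-compatible with Y, i.e., for each α, E[h(Y)|F^X_α ∨ F^Y_α] = E[h(Y)|F^Y_α] for all bounded Borel h on S2. Then every {F^Y_α}-martingale M is a {F^Y_α ∨ F^X_α}-martingale. -/
import Mathlib


open MeasureTheory ProbabilityTheory MeasurableSpace

open Filter Topology in
/-- Doob–Dynkin factorization: a real-valued function that is strongly measurable with
respect to `comap Y m` factors as `g ∘ Y` with `g` `m`-measurable. -/
lemma doob_dynkin_factor {Ω S : Type*} {m : MeasurableSpace S} {Y : Ω → S} {f : Ω → ℝ}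
    (hf : StronglyMeasurable[MeasurableSpace.comap Y m] f) :
    ∃ g : S → ℝ, Measurable[m] g ∧ f = g ∘ Y := by
  classical
  letI : MeasurableSpace Ω := MeasurableSpace.comap Y m
  -- first, factor each approximating simple function
  have hsimple : ∀ n : ℕ, ∃ g : S → ℝ, Measurable[m] g ∧ ∀ ω, hf.approx n ω = g (Y ω) := by
    intro n
    set φ := hf.approx n with hφ
    have hpre : ∀ c : ℝ, ∃ t : Set S, MeasurableSet[m] t ∧ Y ⁻¹' t = φ ⁻¹' {c} := by
      intro c
      have := φ.measurableSet_preimage {c}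
      rcases this with ⟨t, ht, hYt⟩
      exact ⟨t, ht, hYt⟩
    choose t ht hYt using hpre
    refine ⟨fun x => ∑ c ∈ φ.range, if x ∈ t c then c else 0, ?_, ?_⟩
    · refine Finset.measurable_sum _ fun c _ => ?_
      exact Measurable.ite (ht c) measurable_const measurable_const
    · intro ω
      have hmem : ∀ c : ℝ, Y ω ∈ t c ↔ φ ω = c := by
        intro c
        constructor
        · intro h
          have : ω ∈ Y ⁻¹' t c := h
          rw [hYt c] at this
          simpa using this
        · intro h
          have : ω ∈ φ ⁻¹' {c} := by simpa using h
          rw [← hYt c] at this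
          exact this
      have hrw : ∀ c : ℝ, (if Y ω ∈ t c then c else 0) = if c = φ ω then c else 0 := by
        intro c
        by_cases h : Y ω ∈ t c
        · have hc := (hmem c).mp h
          subst hc
          simp [h]
        · have : ¬ c = φ ω := fun hc => h ((hmem c).mpr hc.symm)
          simp [h, this]
      show φ ω = ∑ c ∈ φ.range, if Y ω ∈ t c then c else 0
      rw [Finset.sum_congr rfl fun c _ => hrw c,
        Finset.sum_ite_eq' φ.range (φ ω) (fun c => c)]
      simp [φ.mem_range_self ω]
  choose gn hgn hgnY using hsimple
  -- the set where the sequence converges is `m`-measurable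
  set s : Set S := {x | ∃ c : ℝ, Tendsto (fun n => gn n x) atTop (𝓝 c)} with hs
  have hsm : MeasurableSet[m] s := measurableSet_exists_tendsto hgn
  classical
  set g : S → ℝ := fun x => if h : x ∈ s then h.choose else 0 with hg
  -- auxiliary modified sequence converging everywhere to g
  have htend : ∀ x, Tendsto (fun n => if x ∈ s then gn n x else 0) atTop (𝓝 (g x)) := by
    intro x
    by_cases h : x ∈ s
    · simpa [hg, h] using h.choose_spec
    · simpa [hg, h] using tendsto_const_nhds
  have hgm : Measurable[m] g := by
    refine measurable_of_tendsto_metrizable (f := fun n x => if x ∈ s then gn n x else 0)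
      (fun n => Measurable.ite hsm (hgn n) measurable_const) (tendsto_pi_nhds.mpr htend)
  refine ⟨g, hgm, funext fun ω => ?_⟩
  have h1 : Tendsto (fun n => gn n (Y ω)) atTop (𝓝 (f ω)) := by
    have := hf.tendsto_approx ω
    simpa [hgnY] using this
  have hYs : Y ω ∈ s := ⟨f ω, h1⟩
  have h2 : Tendsto (fun n => gn n (Y ω)) atTop (𝓝 (g (Y ω))) := by
    have := htend (Y ω)
    simpa [hYs] using this
  exact tendsto_nhds_unique h1 h2

/-- Lemma 2.6 of Kurtz: if `{F^Y_α}` and `{F^X_α}` are filtrations and `X` is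
`C`-compatible with `Y`, then every `{F^Y_α}`-martingale is a
`{F^Y_α ∨ F^X_α}`-martingale. -/
theorem stmt6
    {S1 S2 : Type} [mS1 : MeasurableSpace S1] [TopologicalSpace S1] [PolishSpace S1] [BorelSpace S1]
    [mS2 : MeasurableSpace S2] [TopologicalSpace S2] [PolishSpace S2] [BorelSpace S2]
    {Ω : Type} [MeasurableSpace Ω] (P : Measure Ω) [IsProbabilityMeasure P]
    (X : Ω → S1) (Y : Ω → S2) (hX : Measurable X) (hY : Measurable Y)
    {A : Type} [PartialOrder A]
    (B1 : A → MeasurableSpace S1) (hB1 : ∀ α, B1 α ≤ mS1) (hB1mono : Monotone B1)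
    (B2 : A → MeasurableSpace S2) (hB2 : ∀ α, B2 α ≤ mS2) (hB2mono : Monotone B2)
    -- C-compatibility of X with Y (for integrable h, equivalently bounded Borel h)
    (hcompat : ∀ (α : A) (h : S2 → ℝ), Measurable h → Integrable (fun ω => h (Y ω)) P →
      P[fun ω => h (Y ω)|MeasurableSpace.comap X (B1 α) ⊔ MeasurableSpace.comap Y (B2 α)]
        =ᵐ[P] P[fun ω => h (Y ω)|MeasurableSpace.comap Y (B2 α)])
    (M : A → Ω → ℝ)
    (hadapted : ∀ α, StronglyMeasurable[MeasurableSpace.comap Y (B2 α)] (M α))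
    (hint : ∀ α, Integrable (M α) P)
    (hmart : ∀ α1 α2 : A, α1 ≤ α2 →
      P[M α2|MeasurableSpace.comap Y (B2 α1)] =ᵐ[P] M α1) :
    ∀ α1 α2 : A, α1 ≤ α2 →
      P[M α2|MeasurableSpace.comap Y (B2 α1) ⊔ MeasurableSpace.comap X (B1 α1)]
        =ᵐ[P] M α1 := by
  intro α1 α2 h12
  obtain ⟨g, hg, hfg⟩ := doob_dynkin_factor (hadapted α2)
  have hgm : Measurable g := hg.mono (hB2 α2) le_rfl
  have hMg : M α2 = fun ω => g (Y ω) := hfg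
  have hint2 : Integrable (fun ω => g (Y ω)) P := hMg ▸ hint α2
  have key := hcompat α1 g hgm hint2
  rw [← hMg] at key
  rw [sup_comm] at key
  exact key.trans (hmart α1 α2 h12)
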